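/- Fix λ with λ ≠ 0, 1 and q = 1 − λ. Let p₀,…,p_d be probability densities w.r.t. ν with Z_i := ∫ p_i^q dν ∈ (0,∞), and let η be in the closed unit simplex with λ-mixture density p_η = (Σ_i η_i p_i^q/Z_i)^{1/q} / ∫ (Σ_j η_j p_j^q/Z_j)^{1/q} dν (assumed well-defined). Set α = 2λ − 1 and w_i = (η_i/Z_i)/(Σ_j η_j/Z_j). Then p_η equals the α-mixture p_α(·;w) = c(w)·(Σ_i w_i p_i^{(1−α)/2})^{2/(1−α)} with the normalizing constant c(w); moreover the parameter maps η ↦ w and w ↦ η, with η_i = w_i Z_i / Σ_j w_j Z_j, are mutually inverse bijections of the simplex. Hence a λ-mixture family is a reparameterization of the α-mixture family with α = 2λ − 1. -/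

import Mathlib

open MeasureTheory Real
open scoped RealInnerProductSpace ENNReal BigOperators

noncomputable section

private lemma sum_mul_pos_aux {d : ℕ} (a b : Fin (d + 1) → ℝ) (ha : ∀ i, 0 ≤ a i)
    (hsum : ∑ i, a i = 1) (hb : ∀ i, 0 < b i) : 0 < ∑ i, a i * b i := by
  obtain ⟨i, hi⟩ : ∃ i, a i ≠ 0 := by
    by_contra h
    push_neg at h
    simp [h] at hsum
  have hpos : 0 < a i * b i := mul_pos ((ha i).lt_of_ne (Ne.symm hi)) (hb i)
  exact hpos.trans_le (Finset.single_le_sum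
    (fun j _ => mul_nonneg (ha j) (hb j).le) (Finset.mem_univ i))

/-- A λ-mixture family is a reparameterization of the α-mixture family with
`α = 2λ − 1` (so `(1−α)/2 = q = 1 − λ`): with `Z_i = ∫ p_i^q dν ∈ (0,∞)` and
`w_i = (η_i/Z_i)/Σ_j(η_j/Z_j)`, the λ-mixture density `p_η` equals the normalized α-mixture
`c(w)·(Σ_i w_i p_i^q)^{1/q}`, and the parameter maps `η ↦ w`, `w ↦ η` (with
`η_i = w_i Z_i/Σ_j w_j Z_j`) are mutually inverse bijections of the simplex. -/
theorem lambdaMixture_reparam_alphaMixture {d : ℕ} {X : Type*} [MeasurableSpace X]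
    (ν : Measure X)
    (lam q : ℝ) (hlam0 : lam ≠ 0) (hlam1 : lam ≠ 1) (hq : q = 1 - lam)
    (p : Fin (d + 1) → X → ℝ) (hpnn : ∀ i x, 0 ≤ p i x)
    (hprob : ∀ i, ∫ x, p i x ∂ν = 1)
    (Z : Fin (d + 1) → ℝ) (hZ : ∀ i, Z i = ∫ x, p i x ^ q ∂ν)
    (hZpos : ∀ i, 0 < Z i) (hZint : ∀ i, Integrable (fun x => p i x ^ q) ν)
    (η : Fin (d + 1) → ℝ) (hη0 : ∀ i, 0 ≤ η i) (hη1 : ∑ i, η i = 1)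
    (D : ℝ) (hD : D = ∫ x, (∑ i, η i * (p i x ^ q / Z i)) ^ (1 / q) ∂ν) (hDpos : 0 < D)
    (pη : X → ℝ) (hpη : ∀ x, pη x = (∑ i, η i * (p i x ^ q / Z i)) ^ (1 / q) / D)
    (w : Fin (d + 1) → ℝ) (hw : ∀ i, w i = (η i / Z i) / ∑ j, η j / Z j) :
    (∀ i, 0 ≤ w i) ∧ (∑ i, w i = 1) ∧
    (∀ i, w i * Z i / (∑ j, w j * Z j) = η i) ∧
    (∃ c : ℝ, 0 < c ∧ (∀ x, pη x = c * (∑ i, w i * p i x ^ q) ^ (1 / q)) ∧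
      ∫ x, c * (∑ i, w i * p i x ^ q) ^ (1 / q) ∂ν = 1) ∧
    (∀ w' : Fin (d + 1) → ℝ, (∀ i, 0 ≤ w' i) → (∑ i, w' i = 1) →
      (∀ i, 0 ≤ w' i * Z i / ∑ j, w' j * Z j) ∧
      (∑ i, w' i * Z i / ∑ j, w' j * Z j) = 1 ∧
      ∀ i, ((w' i * Z i / ∑ j, w' j * Z j) / Z i) /
          (∑ j, (w' j * Z j / ∑ k, w' k * Z k) / Z j) = w' i) := by
  set S : ℝ := ∑ j, η j / Z j with hSdef
  have hSpos : 0 < S := by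
    have := sum_mul_pos_aux η (fun j => (Z j)⁻¹) hη0 hη1 (fun j => inv_pos.mpr (hZpos j))
    simpa [hSdef, div_eq_mul_inv] using this
  have hw0 : ∀ i, 0 ≤ w i := fun i => by
    rw [hw i]
    exact div_nonneg (div_nonneg (hη0 i) (hZpos i).le) hSpos.le
  have hwsum : ∑ i, w i = 1 := by
    simp only [hw]
    rw [← Finset.sum_div, ← hSdef, div_self hSpos.ne']
  have hwZ : ∀ i, w i * Z i = η i / S := fun i => by
    rw [hw i, div_mul_eq_mul_div, div_mul_cancel₀ _ (hZpos i).ne']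
  have hsumwZ : ∑ j, w j * Z j = 1 / S := by
    simp only [hwZ]
    rw [← Finset.sum_div, hη1]
  have hback : ∀ i, w i * Z i / (∑ j, w j * Z j) = η i := fun i => by
    rw [hwZ i, hsumwZ]
    field_simp
  refine ⟨hw0, hwsum, hback, ?_, ?_⟩
  · refine ⟨S ^ (1 / q) / D, div_pos (Real.rpow_pos_of_pos hSpos _) hDpos, ?_, ?_⟩
    · intro x
      have hkey : ∀ x : X, (∑ i, η i * (p i x ^ q / Z i)) ^ (1 / q)
          = S ^ (1 / q) * (∑ i, w i * p i x ^ q) ^ (1 / q) := by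
        intro x
        have hsum_eq : ∑ i, η i * (p i x ^ q / Z i) = S * ∑ i, w i * p i x ^ q := by
          rw [Finset.mul_sum]
          refine Finset.sum_congr rfl fun i _ => ?_
          have hwS : w i * S = η i / Z i := by
            rw [hw i, div_mul_cancel₀ _ hSpos.ne']
          calc η i * (p i x ^ q / Z i) = (η i / Z i) * p i x ^ q := by ring
            _ = S * (w i * p i x ^ q) := by rw [← hwS]; ring
        rw [hsum_eq, Real.mul_rpow hSpos.le
          (Finset.sum_nonneg fun i _ => mul_nonneg (hw0 i) (Real.rpow_nonneg (hpnn i x) q))]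
      rw [hpη x, hkey x]
      ring
    · have hfun : (fun x => S ^ (1 / q) / D * (∑ i, w i * p i x ^ q) ^ (1 / q)) = pη := by
        funext x
        rw [hpη x]
        have hkey : (∑ i, η i * (p i x ^ q / Z i)) ^ (1 / q)
            = S ^ (1 / q) * (∑ i, w i * p i x ^ q) ^ (1 / q) := by
          have hsum_eq : ∑ i, η i * (p i x ^ q / Z i) = S * ∑ i, w i * p i x ^ q := by
            rw [Finset.mul_sum]
            refine Finset.sum_congr rfl fun i _ => ?_
            have hwS : w i * S = η i / Z i := by
              rw [hw i, div_mul_cancel₀ _ hSpos.ne']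
            calc η i * (p i x ^ q / Z i) = (η i / Z i) * p i x ^ q := by ring
              _ = S * (w i * p i x ^ q) := by rw [← hwS]; ring
          rw [hsum_eq, Real.mul_rpow hSpos.le
            (Finset.sum_nonneg fun i _ => mul_nonneg (hw0 i) (Real.rpow_nonneg (hpnn i x) q))]
        rw [hkey]
        ring
      have hint : ∫ x, pη x ∂ν = 1 := by
        simp only [hpη]
        rw [integral_div, ← hD, div_self hDpos.ne']
      rw [hfun]
      exact hint
  · intro w' hw'0 hw'1
    set T : ℝ := ∑ j, w' j * Z j with hTdef
    have hTpos : 0 < T := sum_mul_pos_aux w' Z hw'0 hw'1 hZpos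
    refine ⟨fun i => div_nonneg (mul_nonneg (hw'0 i) (hZpos i).le) hTpos.le, ?_, ?_⟩
    · rw [← Finset.sum_div, ← hTdef, div_self hTpos.ne']
    · intro i
      have h1 : ∀ j, (w' j * Z j / T) / Z j = w' j / T := fun j => by
        rw [div_div, mul_comm T (Z j), ← div_div, mul_div_cancel_right₀ _ (hZpos j).ne']
      rw [h1 i]
      rw [show (∑ j, (w' j * Z j / T) / Z j) = ∑ j, w' j / T from
        Finset.sum_congr rfl fun j _ => h1 j]
      rw [← Finset.sum_div, hw'1]
      field_simp
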